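/- arXiv:2012.00889 — 3 statements merged into one kernel-verified Lean document; each statement's English description precedes it below -/
import Mathlib

section
/- With α and β as above, for all 1 ≤ t ≤ L−1 the quantity (1/Z)·α_t(s)·T(s'|s,a)·exp(γ^{t−1}R(s,a)+γ^{t−1}R(s,a,s'))·∑_{l=t+1}^{L} β_{l,l−t}(s') equals the probability, under the globally normalized Gibbs distribution p(τ) = q(τ)e^{R(τ)}/Z over trajectories of lengths 1 to L, that a trajectory has length at least t+1 and its t-th transition is (s,a,s'). -/
set_option linter.unusedSectionVars false
set_option maxHeartbeats 1000000
namespace FBM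
open Finset
lemma sum_snoc_split {X : Type*} [Fintype X] {n : ℕ} (F : (Fin (n + 1) → X) → ℝ) :
    ∑ f : Fin (n + 1) → X, F f = ∑ x : X, ∑ f : Fin n → X, F (Fin.snoc f x) := by
  rw [← Equiv.sum_comp (Fin.snocEquiv (fun _ => X)) F, Fintype.sum_prod_type]
  rfl

lemma sum_cons_split {X : Type*} [Fintype X] {n : ℕ} (F : (Fin (n + 1) → X) → ℝ) :
    ∑ f : Fin (n + 1) → X, F f = ∑ x : X, ∑ f : Fin n → X, F (Fin.cons x f) := by
  rw [← Equiv.sum_comp (Fin.consEquiv (fun _ => X)) F, Fintype.sum_prod_type]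
  rfl

lemma sum_fin_one {X : Type*} [Fintype X] (F : (Fin 1 → X) → ℝ) :
    ∑ f : Fin 1 → X, F f = ∑ x : X, F (fun _ => x) := by
  rw [← Equiv.sum_comp (Equiv.funUnique (Fin 1) X).symm F]
  rfl

lemma snoc_mk {X : Type*} {n j : ℕ} (f : Fin n → X) (x : X) (h2 : j < n + 1) (h : j < n) :
    Fin.snoc (α := fun _ => X) f x (⟨j, h2⟩ : Fin (n + 1)) = f ⟨j, h⟩ := by
  have e : (⟨j, h2⟩ : Fin (n + 1)) = Fin.castSucc ⟨j, h⟩ := rfl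
  rw [e, Fin.snoc_castSucc]

lemma snoc_mk_last {X : Type*} {n : ℕ} (f : Fin n → X) (x : X) (h2 : n < n + 1) :
    Fin.snoc (α := fun _ => X) f x (⟨n, h2⟩ : Fin (n + 1)) = x := by
  have e : (⟨n, h2⟩ : Fin (n + 1)) = Fin.last n := rfl
  rw [e, Fin.snoc_last]

lemma snoc_zero' {X : Type*} {n : ℕ} (f : Fin (n + 1) → X) (x : X) :
    Fin.snoc (α := fun _ => X) f x (0 : Fin (n + 2)) = f 0 := by
  rw [← Fin.castSucc_zero, Fin.snoc_castSucc]

variable {S A : Type*} [Fintype S] [Fintype A] [DecidableEq S] [DecidableEq A]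

/-- product of transition probabilities along a trajectory -/
def prodT (T : S → A → S → ℝ) {n : ℕ} (σ : Fin (n + 1) → S) (as : Fin n → A) : ℝ :=
  ∏ t : Fin n, T (σ t.castSucc) (as t) (σ t.succ)

/-- discounted reward of a trajectory, with discount offset `c` -/
def sumR (γ : ℝ) (R1 : S → ℝ) (R2 : S → A → ℝ) (R3 : S → A → S → ℝ) (c : ℕ)
    {n : ℕ} (σ : Fin (n + 1) → S) (as : Fin n → A) : ℝ :=
  (∑ t : Fin (n + 1), γ ^ (c + (t : ℕ)) * R1 (σ t)) +
    ∑ t : Fin n, γ ^ (c + (t : ℕ)) *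
      (R2 (σ t.castSucc) (as t) + R3 (σ t.castSucc) (as t) (σ t.succ))

noncomputable def trajW (T : S → A → S → ℝ) (γ : ℝ) (R1 : S → ℝ) (R2 : S → A → ℝ)
    (R3 : S → A → S → ℝ) (c : ℕ) {n : ℕ} (σ : Fin (n + 1) → S) (as : Fin n → A) : ℝ :=
  prodT T σ as * Real.exp (sumR γ R1 R2 R3 c σ as)

variable (T : S → A → S → ℝ) (γ : ℝ) (R1 : S → ℝ) (R2 : S → A → ℝ) (R3 : S → A → S → ℝ)

lemma prodT_snoc {n : ℕ} (σ : Fin (n + 1) → S) (as : Fin n → A) (x : S) (b : A) :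
    prodT T (Fin.snoc σ x) (Fin.snoc as b) = prodT T σ as * T (σ (Fin.last n)) b x := by
  unfold prodT
  rw [Fin.prod_univ_castSucc]
  simp [Fin.snoc_castSucc, Fin.snoc_last, Fin.succ_castSucc, Fin.succ_last, -Fin.castSucc_succ]

lemma prodT_cons {n : ℕ} (x : S) (b : A) (σ : Fin (n + 1) → S) (as : Fin n → A) :
    prodT T (Fin.cons x σ) (Fin.cons b as) = T x b (σ 0) * prodT T σ as := by
  unfold prodT
  rw [Fin.prod_univ_succ]
  have : ∀ t : Fin n, (Fin.cons (α := fun _ => S) x σ) t.succ.castSucc = σ t.castSucc :=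
    fun t => by rw [← Fin.succ_castSucc, Fin.cons_succ]
  simp [Fin.cons_succ, Fin.cons_zero, this]

lemma sumR_snoc (c : ℕ) {n : ℕ} (σ : Fin (n + 1) → S) (as : Fin n → A) (x : S) (b : A) :
    sumR γ R1 R2 R3 c (Fin.snoc σ x) (Fin.snoc as b) =
      sumR γ R1 R2 R3 c σ as +
        (γ ^ (c + n) * (R2 (σ (Fin.last n)) b + R3 (σ (Fin.last n)) b x) +
          γ ^ (c + n + 1) * R1 x) := by
  unfold sumR
  rw [Fin.sum_univ_castSucc (n := n), Fin.sum_univ_castSucc (n := n + 1)]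
  simp only [Fin.snoc_castSucc, Fin.snoc_last, Fin.succ_castSucc, Fin.succ_last,
    Fin.coe_castSucc, Fin.val_last]
  ring

lemma sumR_cons (c : ℕ) {n : ℕ} (x : S) (b : A) (σ : Fin (n + 1) → S) (as : Fin n → A) :
    sumR γ R1 R2 R3 c (Fin.cons x σ) (Fin.cons b as) =
      γ ^ c * (R1 x + R2 x b + R3 x b (σ 0)) + sumR γ R1 R2 R3 (c + 1) σ as := by
  unfold sumR
  rw [Fin.sum_univ_succ (n := n), Fin.sum_univ_succ (n := n + 1)]
  have e2 : ∀ t : Fin n, Fin.cons (α := fun _ => S) x σ t.succ.castSucc = σ t.castSucc :=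
    fun t => by rw [← Fin.succ_castSucc, Fin.cons_succ]
  simp only [Fin.cons_succ, Fin.cons_zero, Fin.val_succ, Fin.castSucc_zero, Fin.val_zero,
    Nat.add_zero, e2]
  have h1 : ∀ (t : ℕ), γ ^ (c + (t + 1)) = γ ^ (c + 1 + t) := fun t => by ring_nf
  simp only [h1]
  ring

lemma trajW_snoc (c : ℕ) {n : ℕ} (σ : Fin (n + 1) → S) (as : Fin n → A) (x : S) (b : A) :
    trajW T γ R1 R2 R3 c (Fin.snoc σ x) (Fin.snoc as b) =
      trajW T γ R1 R2 R3 c σ as * (T (σ (Fin.last n)) b x *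
        Real.exp (γ ^ (c + n) * (R2 (σ (Fin.last n)) b + R3 (σ (Fin.last n)) b x) +
          γ ^ (c + n + 1) * R1 x)) := by
  unfold trajW
  rw [prodT_snoc, sumR_snoc, Real.exp_add]
  ring

lemma trajW_cons (c : ℕ) {n : ℕ} (x : S) (b : A) (σ : Fin (n + 1) → S) (as : Fin n → A) :
    trajW T γ R1 R2 R3 c (Fin.cons x σ) (Fin.cons b as) =
      T x b (σ 0) * Real.exp (γ ^ c * (R1 x + R2 x b + R3 x b (σ 0))) *
        trajW T γ R1 R2 R3 (c + 1) σ as := by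
  unfold trajW
  rw [prodT_cons, sumR_cons, Real.exp_add]
  ring

lemma trajW_one (c : ℕ) (σ : Fin 1 → S) (as : Fin 0 → A) :
    trajW T γ R1 R2 R3 c σ as = Real.exp (γ ^ c * R1 (σ 0)) := by
  unfold trajW prodT sumR
  simp


noncomputable def Phi (w1 : S → ℝ) (c n : ℕ) (s2 : S) : ℝ :=
  ∑ σ : Fin (n + 1) → S, ∑ as : Fin n → A,
    if σ (Fin.last n) = s2 then w1 (σ 0) * trajW T γ R1 R2 R3 c σ as else 0

noncomputable def Psi (c n : ℕ) (s0 : S) : ℝ :=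
  ∑ σ : Fin (n + 1) → S, ∑ as : Fin n → A,
    if σ 0 = s0 then trajW T γ R1 R2 R3 c σ as else 0

lemma Phi_zero (w1 : S → ℝ) (c : ℕ) (s2 : S) :
    Phi T γ R1 R2 R3 w1 c 0 s2 = w1 s2 * Real.exp (γ ^ c * R1 s2) := by
  unfold Phi
  rw [sum_fin_one]
  have : ∀ x : S, (∑ as : Fin 0 → A,
      if (fun _ : Fin 1 => x) (Fin.last 0) = s2
      then w1 x * trajW T γ R1 R2 R3 c (fun _ => x) as else 0) =
      if x = s2 then w1 x * Real.exp (γ ^ c * R1 x) else 0 := by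
    intro x
    rw [Fintype.sum_unique]
    simp [trajW_one]
  simp only [this]
  simp

lemma Psi_zero (c : ℕ) (s0 : S) :
    Psi T γ R1 R2 R3 c 0 s0 = Real.exp (γ ^ c * R1 s0) := by
  unfold Psi
  rw [sum_fin_one]
  have : ∀ x : S, (∑ as : Fin 0 → A,
      if (fun _ : Fin 1 => x) 0 = s0
      then trajW T γ R1 R2 R3 c (fun _ => x) as else 0) =
      if x = s0 then Real.exp (γ ^ c * R1 x) else 0 := by
    intro x
    rw [Fintype.sum_unique]
    simp [trajW_one]
  simp only [this]
  simp

lemma Phi_succ (w1 : S → ℝ) (c n : ℕ) (s2 : S) :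
    Phi T γ R1 R2 R3 w1 c (n + 1) s2 =
      ∑ sp : S, ∑ ap : A, Phi T γ R1 R2 R3 w1 c n sp *
        (T sp ap s2 * Real.exp (γ ^ (c + n) * (R2 sp ap + R3 sp ap s2) +
          γ ^ (c + n + 1) * R1 s2)) := by
  unfold Phi
  rw [sum_snoc_split]
  have hσ : ∀ x : S, ∀ σ : Fin (n + 1) → S,
      (∑ as : Fin (n + 1) → A,
        if (Fin.snoc σ x : Fin (n + 2) → S) (Fin.last (n + 1)) = s2
        then w1 ((Fin.snoc σ x : Fin (n + 2) → S) 0) *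
          trajW T γ R1 R2 R3 c (Fin.snoc σ x) as else 0) =
      if x = s2 then ∑ b : A, ∑ as : Fin n → A,
        w1 (σ 0) * trajW T γ R1 R2 R3 c σ as *
          (T (σ (Fin.last n)) b x *
            Real.exp (γ ^ (c + n) * (R2 (σ (Fin.last n)) b + R3 (σ (Fin.last n)) b x) +
              γ ^ (c + n + 1) * R1 x)) else 0 := by
    intro x σ
    rw [sum_snoc_split]
    simp only [Fin.snoc_last, snoc_zero', trajW_snoc]
    split_ifs with h
    · exact Finset.sum_congr rfl fun b _ => Finset.sum_congr rfl fun as _ => by ring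
    · simp
  simp only [hσ]
  rw [Finset.sum_comm]
  simp only [Finset.sum_ite_eq', Finset.mem_univ, if_true]
  rw [Finset.sum_comm]
  conv_rhs => rw [Finset.sum_comm]
  refine Finset.sum_congr rfl fun b _ => ?_
  simp only [Finset.sum_mul, ite_mul, zero_mul]
  conv_rhs => rw [Finset.sum_comm]
  refine Finset.sum_congr rfl fun σ _ => ?_
  rw [Finset.sum_comm]
  simp only [Finset.sum_ite_eq, Finset.mem_univ, if_true]

lemma Psi_succ (c n : ℕ) (s0 : S) :
    Psi T γ R1 R2 R3 c (n + 1) s0 =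
      ∑ ap : A, ∑ s1 : S, T s0 ap s1 *
        Real.exp (γ ^ c * (R1 s0 + R2 s0 ap + R3 s0 ap s1)) *
          Psi T γ R1 R2 R3 (c + 1) n s1 := by
  unfold Psi
  rw [sum_cons_split]
  have hσ : ∀ x : S, ∀ σ : Fin (n + 1) → S,
      (∑ as : Fin (n + 1) → A,
        if (Fin.cons x σ : Fin (n + 2) → S) 0 = s0
        then trajW T γ R1 R2 R3 c (Fin.cons x σ) as else 0) =
      if x = s0 then ∑ b : A, ∑ as : Fin n → A,
        T x b (σ 0) * Real.exp (γ ^ c * (R1 x + R2 x b + R3 x b (σ 0))) *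
          trajW T γ R1 R2 R3 (c + 1) σ as else 0 := by
    intro x σ
    rw [sum_cons_split]
    simp only [Fin.cons_zero, trajW_cons]
    split_ifs with h
    · rfl
    · simp
  simp only [hσ]
  rw [Finset.sum_comm]
  simp only [Finset.sum_ite_eq', Finset.mem_univ, if_true]
  -- goal: ∑ σ ∑ b ∑ as, T s0 b (σ 0) * exp(...) * trajW (c+1) σ as
  --     = ∑ ap ∑ s1, T s0 ap s1 * exp * Psi (c+1) n s1
  rw [Finset.sum_comm]
  refine Finset.sum_congr rfl fun b _ => ?_
  simp only [Finset.mul_sum, mul_ite, mul_zero]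
  conv_rhs => rw [Finset.sum_comm]
  refine Finset.sum_congr rfl fun σ _ => ?_
  rw [Finset.sum_comm]
  simp only [Finset.sum_ite_eq, Finset.mem_univ, if_true]

lemma sum_Phi_ind (c n : ℕ) (s0 : S) :
    ∑ s2 : S, Phi T γ R1 R2 R3 (fun x => if x = s0 then (1 : ℝ) else 0) c n s2 =
      Psi T γ R1 R2 R3 c n s0 := by
  unfold Phi Psi
  rw [Finset.sum_comm]
  refine Finset.sum_congr rfl fun σ _ => ?_
  rw [Finset.sum_comm]
  refine Finset.sum_congr rfl fun as _ => ?_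
  simp only [Finset.sum_ite_eq', Finset.mem_univ, if_true]
  by_cases h : σ 0 = s0 <;> simp [h]


noncomputable def pinned (p0 : S → ℝ) (i : ℕ) (s : S) (a : A) (s' : S) (m : ℕ)
    (him : i + 1 ≤ m) (s2 : S) : ℝ :=
  ∑ σ : Fin (m + 1) → S, ∑ as : Fin m → A,
    if σ ⟨i, by omega⟩ = s ∧ as ⟨i, by omega⟩ = a ∧ σ ⟨i + 1, by omega⟩ = s' ∧
        σ (Fin.last m) = s2
    then p0 (σ 0) * trajW T γ R1 R2 R3 0 σ as else 0

lemma pinned_base (p0 : S → ℝ) (i : ℕ) (s : S) (a : A) (s' : S) (s2 : S) :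
    pinned T γ R1 R2 R3 p0 i s a s' (i + 1) (by omega) s2 =
      Phi T γ R1 R2 R3 p0 0 i s * (T s a s' * Real.exp (γ ^ i * (R2 s a + R3 s a s'))) *
        ((if s2 = s' then (1 : ℝ) else 0) * Real.exp (γ ^ (i + 1) * R1 s2)) := by
  unfold pinned
  rw [sum_snoc_split]
  conv_lhs => enter [2, x, 2, σ]; rw [sum_snoc_split]
  have e1 : ∀ (σ' : Fin (i + 1) → S) (x : S),
      (Fin.snoc (α := fun _ => S) σ' x) (⟨i, by omega⟩ : Fin (i + 2)) = σ' (Fin.last i) :=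
    fun σ' x => snoc_mk σ' x (by omega) (by omega)
  have e2 : ∀ (σ' : Fin (i + 1) → S) (x : S),
      (Fin.snoc (α := fun _ => S) σ' x) (⟨i + 1, by omega⟩ : Fin (i + 2)) = x :=
    fun σ' x => snoc_mk_last σ' x (by omega)
  have e3 : ∀ (as' : Fin i → A) (b : A),
      (Fin.snoc (α := fun _ => A) as' b) (⟨i, by omega⟩ : Fin (i + 1)) = b :=
    fun as' b => snoc_mk_last as' b (by omega)
  simp only [e1, e2, e3, Fin.snoc_last, snoc_zero', trajW_snoc]
  have creorder : ∀ (P : Prop) [Decidable P] (b : A) (x : S),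
      (P ∧ b = a ∧ x = s' ∧ x = s2) ↔ (x = s2 ∧ (b = a ∧ (P ∧ x = s'))) := by
    intro P _ b x; tauto
  simp only [creorder, ite_and, Finset.sum_ite_irrel, Finset.sum_const_zero,
    Finset.sum_ite_eq, Finset.sum_ite_eq', Finset.mem_univ, if_true]
  unfold Phi
  simp only [Finset.sum_mul, ite_mul, zero_mul, mul_ite, mul_zero, mul_one,
    Finset.sum_ite_irrel, Finset.sum_const_zero]
  rcases eq_or_ne s2 s' with h2 | h2
  · subst h2
    simp only [eq_self_iff_true, if_true]
    refine Finset.sum_congr rfl fun σ' _ => ?_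
    by_cases h1 : σ' (Fin.last i) = s
    · rw [if_pos h1, if_pos h1]
      refine Finset.sum_congr rfl fun as' _ => ?_
      rw [h1]
      simp only [Nat.zero_add]
      rw [show γ ^ i * (R2 s a + R3 s a s2) + γ ^ (i + 1) * R1 s2 =
        (γ ^ i * R2 s a + γ ^ i * R3 s a s2) + (γ ^ i * R1 s2 * γ) by ring, Real.exp_add]
      ring
    · rw [if_neg h1, if_neg h1]
  · simp only [if_neg h2]
    simp

lemma pinned_succ (p0 : S → ℝ) (i : ℕ) (s : S) (a : A) (s' : S) (m : ℕ)
    (him : i + 1 ≤ m) (s2 : S) :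
    pinned T γ R1 R2 R3 p0 i s a s' (m + 1) (by omega) s2 =
      ∑ sp : S, ∑ ap : A, pinned T γ R1 R2 R3 p0 i s a s' m him sp *
        (T sp ap s2 * Real.exp (γ ^ m * (R2 sp ap + R3 sp ap s2) +
          γ ^ (m + 1) * R1 s2)) := by
  unfold pinned
  rw [sum_snoc_split]
  conv_lhs => enter [2, x, 2, σ]; rw [sum_snoc_split]
  have e1 : ∀ (σ' : Fin (m + 1) → S) (x : S),
      (Fin.snoc (α := fun _ => S) σ' x) (⟨i, by omega⟩ : Fin (m + 2)) = σ' ⟨i, by omega⟩ :=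
    fun σ' x => snoc_mk σ' x (by omega) (by omega)
  have e2 : ∀ (σ' : Fin (m + 1) → S) (x : S),
      (Fin.snoc (α := fun _ => S) σ' x) (⟨i + 1, by omega⟩ : Fin (m + 2)) =
        σ' ⟨i + 1, by omega⟩ :=
    fun σ' x => snoc_mk σ' x (by omega) (by omega)
  have e3 : ∀ (as' : Fin m → A) (b : A),
      (Fin.snoc (α := fun _ => A) as' b) (⟨i, by omega⟩ : Fin (m + 1)) = as' ⟨i, by omega⟩ :=
    fun as' b => snoc_mk as' b (by omega) (by omega)
  simp only [e1, e2, e3, Fin.snoc_last, snoc_zero', trajW_snoc]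
  have creorder : ∀ (P Q R : Prop) [Decidable P] [Decidable Q] [Decidable R] (x : S),
      (P ∧ Q ∧ R ∧ x = s2) ↔ (x = s2 ∧ P ∧ Q ∧ R) := by
    intro P Q R _ _ _ x; tauto
  simp only [creorder, ite_and, Finset.sum_ite_irrel, Finset.sum_const_zero,
    Finset.sum_ite_eq, Finset.sum_ite_eq', Finset.mem_univ, if_true]
  simp only [Finset.sum_mul, ite_mul, zero_mul, mul_ite, mul_zero, mul_one,
    Finset.sum_ite_irrel, Finset.sum_const_zero]
  have swap2 : ∀ (f : S → A → ℝ), ∑ x : S, ∑ y : A, f x y = ∑ y : A, ∑ x : S, f x y :=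
    fun f => Finset.sum_comm
  have swap1 : ∀ (f : S → (Fin (m + 1) → S) → ℝ),
      ∑ x : S, ∑ g : Fin (m + 1) → S, f x g = ∑ g : Fin (m + 1) → S, ∑ x : S, f x g :=
    fun f => Finset.sum_comm
  have swap3 : ∀ (f : S → (Fin m → A) → ℝ),
      ∑ x : S, ∑ g : Fin m → A, f x g = ∑ g : Fin m → A, ∑ x : S, f x g :=
    fun f => Finset.sum_comm
  have swap4 : ∀ (f : A → (Fin (m + 1) → S) → ℝ),
      ∑ y : A, ∑ g : Fin (m + 1) → S, f y g = ∑ g : Fin (m + 1) → S, ∑ y : A, f y g :=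
    fun f => Finset.sum_comm
  simp only [swap2, swap1, swap3, swap4, Finset.sum_ite_irrel, Finset.sum_const_zero,
    Finset.sum_ite_eq, Finset.mem_univ, if_true, Nat.zero_add]
  refine Finset.sum_congr rfl fun σ' _ => ?_
  by_cases h1 : σ' ⟨i, by omega⟩ = s
  · rw [if_pos h1, if_pos h1]
    refine Finset.sum_congr rfl fun b _ => Finset.sum_congr rfl fun as' _ => ?_
    split_ifs <;> ring
  · rw [if_neg h1, if_neg h1]



lemma pinned_eq (p0 : S → ℝ) (i : ℕ) (s : S) (a : A) (s' : S) (k : ℕ) (s2 : S) :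
    pinned T γ R1 R2 R3 p0 i s a s' (i + 1 + k) (by omega) s2 =
      Phi T γ R1 R2 R3 p0 0 i s * (T s a s' * Real.exp (γ ^ i * (R2 s a + R3 s a s'))) *
        Phi T γ R1 R2 R3 (fun x => if x = s' then (1 : ℝ) else 0) (i + 1) k s2 := by
  induction k generalizing s2 with
  | zero =>
    rw [Phi_zero]
    exact pinned_base T γ R1 R2 R3 p0 i s a s' s2
  | succ k ih =>
    refine Eq.trans (pinned_succ T γ R1 R2 R3 p0 i s a s' (i + 1 + k) (by omega) s2) ?_
    simp only [ih]
    rw [Phi_succ]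
    simp only [Finset.mul_sum]
    refine Finset.sum_congr rfl fun sp _ => Finset.sum_congr rfl fun ap _ => ?_
    ring_nf

lemma sum_pinned (p0 : S → ℝ) (i : ℕ) (s : S) (a : A) (s' : S) (m : ℕ) (him : i + 1 ≤ m) :
    ∑ s2 : S, pinned T γ R1 R2 R3 p0 i s a s' m him s2 =
      ∑ σ : Fin (m + 1) → S, ∑ as : Fin m → A,
        if σ ⟨i, by omega⟩ = s ∧ as ⟨i, by omega⟩ = a ∧ σ ⟨i + 1, by omega⟩ = s'
        then p0 (σ 0) * trajW T γ R1 R2 R3 0 σ as else 0 := by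
  unfold pinned
  rw [Finset.sum_comm]
  refine Finset.sum_congr rfl fun σ _ => ?_
  rw [Finset.sum_comm]
  refine Finset.sum_congr rfl fun as _ => ?_
  simp only [ite_and, Finset.sum_ite_irrel, Finset.sum_const_zero, Finset.sum_ite_eq,
    Finset.sum_ite_eq', Finset.mem_univ, if_true]

end FBM



open FBM in
/-- The forward-backward expression for the transition marginal is exact: for
`1 ≤ t ≤ L-1` (here `t = i+1`, zero-based transition index `i`), the quantity
`(1/Z)·α_t(s)·T(s'|s,a)·exp(γ^{t-1}R(s,a)+γ^{t-1}R(s,a,s'))·∑_{l=t+1}^{L} β_{l,l-t}(s')`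
equals the probability, under the globally normalized Gibbs distribution
`p(τ) = q(τ)e^{R(τ)}/Z` over trajectories of lengths 1 to L, that a trajectory has
length at least `t+1` and its `t`-th transition is `(s,a,s')`.
`α n` represents `α_{n+1}` in 1-based notation; `β l t` uses the paper's indexing. -/
theorem forward_backward_marginal_exact {S A : Type*} [Fintype S] [Fintype A]
    [DecidableEq S] [DecidableEq A]
    (p0 : S → ℝ) (T : S → A → S → ℝ) (γ : ℝ)
    (R1 : S → ℝ) (R2 : S → A → ℝ) (R3 : S → A → S → ℝ)
    (α : ℕ → S → ℝ)
    (hαbase : ∀ s, α 0 s = p0 s * Real.exp (R1 s))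
    (hαrec : ∀ n s', α (n + 1) s' = ∑ s, ∑ a, α n s * T s a s' *
      Real.exp (γ ^ n * R2 s a + γ ^ n * R3 s a s' + γ ^ (n + 1) * R1 s'))
    (β : ℕ → ℕ → S → ℝ)
    (hβbase : ∀ l, 1 ≤ l → ∀ s, β l 1 s = Real.exp (γ ^ (l - 1) * R1 s))
    (hβrec : ∀ l t, 1 ≤ t → t + 1 ≤ l → ∀ s, β l (t + 1) s =
      ∑ a, ∑ s', T s a s' *
        Real.exp (γ ^ (l - t - 1) * (R1 s + R2 s a + R3 s a s')) * β l t s')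
    (L : ℕ) (Z : ℝ)
    (hZ : Z = ∑ n ∈ Finset.range L, ∑ s, α n s)
    (i : ℕ) (hi : i + 2 ≤ L) (s : S) (a : A) (s' : S) :
    (1 / Z) * (α i s * T s a s' *
        Real.exp (γ ^ i * R2 s a + γ ^ i * R3 s a s') *
        ∑ l ∈ Finset.Icc (i + 2) L, β l (l - (i + 1)) s') =
      ∑ n ∈ Finset.range L, ∑ σ : Fin (n + 1) → S, ∑ as : Fin n → A,
        (if h : i < n then
          (if σ ⟨i, by omega⟩ = s ∧ as ⟨i, h⟩ = a ∧ σ ⟨i + 1, by omega⟩ = s' then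
            ((p0 (σ 0) * ∏ t : Fin n, T (σ t.castSucc) (as t) (σ t.succ)) *
              Real.exp ((∑ t : Fin (n + 1), γ ^ (t : ℕ) * R1 (σ t)) +
                ∑ t : Fin n, γ ^ (t : ℕ) *
                  (R2 (σ t.castSucc) (as t) + R3 (σ t.castSucc) (as t) (σ t.succ)))) / Z
          else 0)
        else 0) := by
  classical
  -- α agrees with the forward closed form Φ
  have halpha : ∀ n s1, α n s1 = Phi T γ R1 R2 R3 p0 0 n s1 := by
    intro n
    induction n with
    | zero =>
      intro s1
      rw [hαbase, Phi_zero]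
      norm_num
    | succ n ih =>
      intro s1
      rw [hαrec, Phi_succ]
      refine Finset.sum_congr rfl fun sp _ => Finset.sum_congr rfl fun ap _ => ?_
      rw [ih]
      have e : γ ^ n * R2 sp ap + γ ^ n * R3 sp ap s1 + γ ^ (n + 1) * R1 s1 =
          γ ^ (0 + n) * (R2 sp ap + R3 sp ap s1) + γ ^ (0 + n + 1) * R1 s1 := by
        simp only [Nat.zero_add]; ring
      rw [e]; ring
  -- β agrees with the backward closed form Ψ
  have hbeta : ∀ k d (s0 : S), β (k + 1 + d) (k + 1) s0 = Psi T γ R1 R2 R3 d k s0 := by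
    intro k
    induction k with
    | zero =>
      intro d s0
      rw [hβbase (0 + 1 + d) (by omega), Psi_zero]
      have e : 0 + 1 + d - 1 = d := by omega
      rw [e]
    | succ k ih =>
      intro d s0
      have e : k + 1 + 1 + d = k + 1 + (d + 1) := by omega
      rw [e, hβrec (k + 1 + (d + 1)) (k + 1) (by omega) (by omega)]
      have e2 : k + 1 + (d + 1) - (k + 1) - 1 = d := by omega
      rw [e2]
      simp only [ih]
      rw [Psi_succ]
  -- helper rewrites
  have hw : ∀ (n : ℕ) (σ : Fin (n + 1) → S) (as : Fin n → A),
      ((p0 (σ 0) * ∏ t : Fin n, T (σ t.castSucc) (as t) (σ t.succ)) *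
        Real.exp ((∑ t : Fin (n + 1), γ ^ (t : ℕ) * R1 (σ t)) +
          ∑ t : Fin n, γ ^ (t : ℕ) *
            (R2 (σ t.castSucc) (as t) + R3 (σ t.castSucc) (as t) (σ t.succ)))) =
      p0 (σ 0) * trajW T γ R1 R2 R3 0 σ as := by
    intro n σ as
    unfold trajW prodT sumR
    simp only [Nat.zero_add]
    ring
  have hdiv : ∀ (c : Prop) [Decidable c] (x : ℝ),
      (if c then x / Z else 0) = (if c then x else 0) / Z := by
    intro c _ x
    split_ifs <;> simp
  -- reindex the LHS sum
  have hfilter : (Finset.range L).filter (fun n => i < n) = Finset.Ico (i + 1) L := by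
    ext n
    simp only [Finset.mem_filter, Finset.mem_range, Finset.mem_Ico]
    omega
  have main : (1 / Z) * (α i s * T s a s' *
        Real.exp (γ ^ i * R2 s a + γ ^ i * R3 s a s') *
        ∑ l ∈ Finset.Icc (i + 2) L, β l (l - (i + 1)) s') =
      ∑ n ∈ Finset.range L, if i < n then
        (α i s * T s a s' * Real.exp (γ ^ i * R2 s a + γ ^ i * R3 s a s') *
          β (n + 1) (n - i) s') / Z else 0 := by
    rw [← Finset.Ico_add_one_right_eq_Icc, Finset.sum_Ico_eq_sum_range]
    conv_rhs => rw [← Finset.sum_filter, hfilter, Finset.sum_Ico_eq_sum_range]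
    rw [show L + 1 - (i + 2) = L - (i + 1) by omega]
    rw [Finset.mul_sum, Finset.mul_sum]
    refine Finset.sum_congr rfl fun k hk => ?_
    have e1 : i + 2 + k - (i + 1) = k + 1 := by omega
    have e2 : i + 1 + k + 1 = i + 2 + k := by omega
    have e3 : i + 1 + k - i = k + 1 := by omega
    rw [e1, e2, e3]
    ring
  rw [main]
  refine Finset.sum_congr rfl fun n hn => ?_
  by_cases h : i < n
  · obtain ⟨k, rfl⟩ : ∃ k, n = i + 1 + k := ⟨n - i - 1, by omega⟩
    rw [if_pos h]
    refine Eq.symm ?_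
    simp only [dif_pos h, hw]
    simp only [hdiv]
    simp only [div_eq_mul_inv, ← Finset.sum_mul]
    rw [← sum_pinned T γ R1 R2 R3 p0 i s a s' (i + 1 + k) (by omega)]
    simp only [pinned_eq]
    rw [← Finset.mul_sum, sum_Phi_ind, ← hbeta k (i + 1) s', ← halpha i s]
    have e1 : k + 1 + (i + 1) = i + 1 + k + 1 := by omega
    have e2 : i + 1 + k - i = k + 1 := by omega
    rw [e1, e2]
    have e3 : γ ^ i * (R2 s a + R3 s a s') = γ ^ i * R2 s a + γ ^ i * R3 s a s' := by ring
    rw [e3]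
    ring
  · rw [if_neg h]
    refine Eq.symm ?_
    simp only [dif_neg h]
    simp
end

section
/- Padding invariance: for a trajectory τ of length l ≤ L in the original episodic MDP, let τ⁺ be the trajectory of length L obtained by appending (a_a, s_a) pairs until length L in the padded MDP. Then q⁺(τ⁺)·exp(R⁺(τ⁺)) = q(τ)·exp(R(τ)), where q⁺ and R⁺ are the dynamics weight and discounted reward in the padded MDP. Consequently, the partition function over fixed-length-L padded trajectories equals the partition function over variable-length (1 ≤ l ≤ L) original trajectories. -/
private lemma sum_trunc {n N : ℕ} (h : n ≤ N) (f : ℕ → ℝ) (h0 : ∀ k, n ≤ k → f k = 0) :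
    ∑ k : Fin N, f (k : ℕ) = ∑ k : Fin n, f (k : ℕ) := by
  rw [Fin.sum_univ_eq_sum_range, Fin.sum_univ_eq_sum_range]
  exact (Finset.sum_subset (Finset.range_subset_range.mpr h)
    (fun k _ hk => h0 k (by simpa using hk))).symm

private lemma prod_trunc {n N : ℕ} (h : n ≤ N) (f : ℕ → ℝ) (h0 : ∀ k, n ≤ k → f k = 1) :
    ∏ k : Fin N, f (k : ℕ) = ∏ k : Fin n, f (k : ℕ) := by
  rw [Fin.prod_univ_eq_prod_range, Fin.prod_univ_eq_prod_range]
  exact (Finset.prod_subset (Finset.range_subset_range.mpr h)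
    (fun k _ hk => h0 k (by simpa using hk))).symm

private lemma pad_key {S A : Type*} [DecidableEq S]
    (ST : Finset S)
    (p0 : S → ℝ) (T : S → A → S → ℝ) (γ : ℝ)
    (R1 : S → ℝ) (R2 : S → A → ℝ) (R3 : S → A → S → ℝ)
    (hterm : ∀ s ∈ ST, ∀ a s', T s a s' = 0)
    (M : ℕ)
    (p0' : Option S → ℝ)
    (hp0s : ∀ s, p0' (some s) = p0 s)
    (R1' : Option S → ℝ)
    (hR1s : ∀ s, R1' (some s) = R1 s) (hR1a : R1' none = 0)
    (T' : Option S → Option A → Option S → ℝ)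
    (hT1 : ∀ s a s', T' (some s) (some a) (some s') = if s ∈ ST then 0 else T s a s')
    (hT3 : ∀ s y, T' (some s) none y = if y = none then 1 else 0)
    (hT4 : ∀ b y, T' none b y = if y = none then 1 else 0)
    (W : ℕ → Option S → Option A → Option S → ℝ)
    (hW1 : ∀ k s a s', s ∉ ST → W k (some s) (some a) (some s') =
      Real.exp (γ ^ k * (R2 s a + R3 s a s')))
    (hW2 : ∀ k x, W k x none none = 1)
    (m : ℕ) (hm : m ≤ M) (σ : Fin (m + 1) → S) (a : Fin m → A) :
      (p0' (if h : (0 : ℕ) < m + 1 then some (σ ⟨0, h⟩) else none) *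
        Real.exp (∑ k : Fin (M + 1), γ ^ (k : ℕ) *
          R1' (if h : (k : ℕ) < m + 1 then some (σ ⟨k, h⟩) else none)) *
        ∏ k : Fin M,
          (T' (if h : (k.castSucc : ℕ) < m + 1 then some (σ ⟨k.castSucc, h⟩) else none)
              (if h : (k : ℕ) < m then some (a ⟨k, h⟩) else none)
              (if h : (k.succ : ℕ) < m + 1 then some (σ ⟨k.succ, h⟩) else none) *
            W k (if h : (k.castSucc : ℕ) < m + 1 then some (σ ⟨k.castSucc, h⟩) else none)
              (if h : (k : ℕ) < m then some (a ⟨k, h⟩) else none)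
              (if h : (k.succ : ℕ) < m + 1 then some (σ ⟨k.succ, h⟩) else none)))
      = p0 (σ 0) * (∏ k : Fin m, T (σ k.castSucc) (a k) (σ k.succ)) *
          Real.exp ((∑ k : Fin (m + 1), γ ^ (k : ℕ) * R1 (σ k)) +
            ∑ k : Fin m, γ ^ (k : ℕ) *
              (R2 (σ k.castSucc) (a k) + R3 (σ k.castSucc) (a k) (σ k.succ))) := by
  set fE : ℕ → ℝ := fun n => γ ^ n *
      R1' (if h : n < m + 1 then some (σ ⟨n, h⟩) else none) with hfE
  set fP : ℕ → ℝ := fun n =>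
      T' (if h : n < m + 1 then some (σ ⟨n, h⟩) else none)
        (if h : n < m then some (a ⟨n, h⟩) else none)
        (if h : n + 1 < m + 1 then some (σ ⟨n + 1, h⟩) else none) *
      W n (if h : n < m + 1 then some (σ ⟨n, h⟩) else none)
        (if h : n < m then some (a ⟨n, h⟩) else none)
        (if h : n + 1 < m + 1 then some (σ ⟨n + 1, h⟩) else none) with hfP
  have h0 : p0' (if h : (0 : ℕ) < m + 1 then some (σ ⟨0, h⟩) else none) = p0 (σ 0) := by
    rw [dif_pos (Nat.succ_pos m), hp0s]
    congr 1
  have hE : (∑ k : Fin (M + 1), γ ^ (k : ℕ) *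
      R1' (if h : (k : ℕ) < m + 1 then some (σ ⟨k, h⟩) else none))
      = ∑ k : Fin (m + 1), γ ^ (k : ℕ) * R1 (σ k) := by
    have h1 : (∑ k : Fin (M + 1), γ ^ (k : ℕ) *
        R1' (if h : (k : ℕ) < m + 1 then some (σ ⟨k, h⟩) else none))
        = ∑ k : Fin (m + 1), fE (k : ℕ) := by
      refine sum_trunc (by omega) fE (fun k hk => ?_)
      simp only [hfE]
      rw [dif_neg (by omega), hR1a, mul_zero]
    rw [h1]
    refine Finset.sum_congr rfl (fun k _ => ?_)
    simp only [hfE]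
    rw [dif_pos k.isLt, hR1s]
  have hP : (∏ k : Fin M,
          (T' (if h : (k.castSucc : ℕ) < m + 1 then some (σ ⟨k.castSucc, h⟩) else none)
              (if h : (k : ℕ) < m then some (a ⟨k, h⟩) else none)
              (if h : (k.succ : ℕ) < m + 1 then some (σ ⟨k.succ, h⟩) else none) *
            W k (if h : (k.castSucc : ℕ) < m + 1 then some (σ ⟨k.castSucc, h⟩) else none)
              (if h : (k : ℕ) < m then some (a ⟨k, h⟩) else none)
              (if h : (k.succ : ℕ) < m + 1 then some (σ ⟨k.succ, h⟩) else none)))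
      = ∏ k : Fin m, fP (k : ℕ) := by
    refine (prod_trunc hm fP (fun k hk => ?_))
    simp only [hfP]
    rw [dif_neg (by omega : ¬ k < m), dif_neg (by omega : ¬ k + 1 < m + 1)]
    by_cases h1 : k < m + 1
    · rw [dif_pos h1, hT3, hW2]; simp
    · rw [dif_neg h1, hT4, hW2]; simp
  have hPk : ∀ k : Fin m, fP (k : ℕ) =
      (if σ k.castSucc ∈ ST then 0 else T (σ k.castSucc) (a k) (σ k.succ)) *
        W (k : ℕ) (some (σ k.castSucc)) (some (a k)) (some (σ k.succ)) := by
    intro k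
    simp only [hfP]
    rw [dif_pos (by omega : (k : ℕ) < m + 1), dif_pos k.isLt,
      dif_pos (by omega : (k : ℕ) + 1 < m + 1)]
    have e1 : (⟨(k : ℕ), by omega⟩ : Fin (m + 1)) = k.castSucc := rfl
    have e2 : (⟨(k : ℕ) + 1, by omega⟩ : Fin (m + 1)) = k.succ := rfl
    have e3 : (⟨(k : ℕ), k.isLt⟩ : Fin m) = k := rfl
    rw [e1, e2, e3, hT1]
  rw [h0, hE, hP]
  by_cases hST : ∀ k : Fin m, σ k.castSucc ∉ ST
  · have : ∀ k : Fin m, fP (k : ℕ) =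
        T (σ k.castSucc) (a k) (σ k.succ) *
          Real.exp (γ ^ (k : ℕ) * (R2 (σ k.castSucc) (a k) + R3 (σ k.castSucc) (a k) (σ k.succ))) := by
      intro k
      rw [hPk k, if_neg (hST k), hW1 _ _ _ _ (hST k)]
    rw [Finset.prod_congr rfl (fun k _ => this k), Finset.prod_mul_distrib,
      ← Real.exp_sum, Real.exp_add]
    ring
  · push_neg at hST
    obtain ⟨k0, hk0⟩ := hST
    have hL : ∏ k : Fin m, fP (k : ℕ) = 0 := by
      refine Finset.prod_eq_zero (Finset.mem_univ k0) ?_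
      rw [hPk k0, if_pos hk0, zero_mul]
    have hR : (∏ k : Fin m, T (σ k.castSucc) (a k) (σ k.succ)) = 0 :=
      Finset.prod_eq_zero (Finset.mem_univ k0) (hterm _ hk0 _ _)
    rw [hL, hR]
    ring

/-- Padding invariance.  The padded MDP uses states `Option S` (with `none` the
auxiliary state `s_a`) and actions `Option A` (with `none` the auxiliary action
`a_a`).  Forbidden transitions (reward −∞) are encoded by per-step exponential
weights `W` equal to 0.  Part 1: for a trajectory `τ` of length `m+1 ≤ M+1` in the
original episodic MDP (no non-final state terminal), padding it with `(a_a, s_a)`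
pairs up to length `M+1` preserves the weight: `q⁺(τ⁺)·e^{R⁺(τ⁺)} = q(τ)·e^{R(τ)}`.
Part 2: consequently, the partition function over fixed-length padded trajectories
equals the partition function over variable-length original trajectories. -/
theorem padding_invariance {S A : Type*} [Fintype S] [Fintype A]
    [DecidableEq S] [DecidableEq A]
    (ST : Finset S)  -- terminal states
    (p0 : S → ℝ) (T : S → A → S → ℝ) (γ : ℝ)
    (R1 : S → ℝ) (R2 : S → A → ℝ) (R3 : S → A → S → ℝ)
    (hterm : ∀ s ∈ ST, ∀ a s', T s a s' = 0)  -- terminal states end the episode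
    (M : ℕ)
    -- padded initial distribution
    (p0' : Option S → ℝ)
    (hp0s : ∀ s, p0' (some s) = p0 s) (hp0a : p0' none = 0)
    -- padded state rewards
    (R1' : Option S → ℝ)
    (hR1s : ∀ s, R1' (some s) = R1 s) (hR1a : R1' none = 0)
    -- padded transition dynamics
    (T' : Option S → Option A → Option S → ℝ)
    (hT1 : ∀ s a s', T' (some s) (some a) (some s') = if s ∈ ST then 0 else T s a s')
    (hT2 : ∀ s a, T' (some s) (some a) none = if s ∈ ST then 1 else 0)
    (hT3 : ∀ s y, T' (some s) none y = if y = none then 1 else 0)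
    (hT4 : ∀ b y, T' none b y = if y = none then 1 else 0)
    -- padded per-step exponentiated state-action / transition reward weights
    (W : ℕ → Option S → Option A → Option S → ℝ)
    (hW1 : ∀ k s a s', s ∉ ST → W k (some s) (some a) (some s') =
      Real.exp (γ ^ k * (R2 s a + R3 s a s')))
    (hW2 : ∀ k x, W k x none none = 1)
    (hW0 : ∀ k x b y,
      ¬((b = none ∧ y = none) ∨
        (∃ s a s', x = some s ∧ b = some a ∧ y = some s' ∧ s ∉ ST)) →
      W k x b y = 0) :
    (∀ (m : ℕ) (hm : m ≤ M) (σ : Fin (m + 1) → S) (a : Fin m → A),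
      (∀ k : Fin m, σ k.castSucc ∉ ST) →
      (p0' (if h : (0 : ℕ) < m + 1 then some (σ ⟨0, h⟩) else none) *
        Real.exp (∑ k : Fin (M + 1), γ ^ (k : ℕ) *
          R1' (if h : (k : ℕ) < m + 1 then some (σ ⟨k, h⟩) else none)) *
        ∏ k : Fin M,
          (T' (if h : (k.castSucc : ℕ) < m + 1 then some (σ ⟨k.castSucc, h⟩) else none)
              (if h : (k : ℕ) < m then some (a ⟨k, h⟩) else none)
              (if h : (k.succ : ℕ) < m + 1 then some (σ ⟨k.succ, h⟩) else none) *
            W k (if h : (k.castSucc : ℕ) < m + 1 then some (σ ⟨k.castSucc, h⟩) else none)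
              (if h : (k : ℕ) < m then some (a ⟨k, h⟩) else none)
              (if h : (k.succ : ℕ) < m + 1 then some (σ ⟨k.succ, h⟩) else none)))
      = p0 (σ 0) * (∏ k : Fin m, T (σ k.castSucc) (a k) (σ k.succ)) *
          Real.exp ((∑ k : Fin (m + 1), γ ^ (k : ℕ) * R1 (σ k)) +
            ∑ k : Fin m, γ ^ (k : ℕ) *
              (R2 (σ k.castSucc) (a k) + R3 (σ k.castSucc) (a k) (σ k.succ))))
    ∧
    (∑ σ : Fin (M + 1) → Option S, ∑ b : Fin M → Option A,
        p0' (σ 0) * Real.exp (∑ k : Fin (M + 1), γ ^ (k : ℕ) * R1' (σ k)) *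
          ∏ k : Fin M, (T' (σ k.castSucc) (b k) (σ k.succ) *
            W k (σ k.castSucc) (b k) (σ k.succ))
      = ∑ m ∈ Finset.range (M + 1), ∑ σ : Fin (m + 1) → S, ∑ a : Fin m → A,
          p0 (σ 0) * (∏ k : Fin m, T (σ k.castSucc) (a k) (σ k.succ)) *
            Real.exp ((∑ k : Fin (m + 1), γ ^ (k : ℕ) * R1 (σ k)) +
              ∑ k : Fin m, γ ^ (k : ℕ) *
                (R2 (σ k.castSucc) (a k) + R3 (σ k.castSucc) (a k) (σ k.succ)))) := by
  constructor
  · intro m hm σ a _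
    exact pad_key ST p0 T γ R1 R2 R3 hterm M p0' hp0s R1' hR1s hR1a T' hT1 hT3 hT4
      W hW1 hW2 m hm σ a
  · conv_rhs => rw [← Fin.sum_univ_eq_sum_range]
    rw [Finset.sum_sigma', Finset.sum_sigma', Finset.sum_sigma']
    rw [Finset.univ_sigma_univ, Finset.univ_sigma_univ, Finset.univ_sigma_univ]
    refine (Finset.sum_bij_ne_zero
      (i := fun y (_ : y ∈ Finset.univ) (_ : _ ≠ (0:ℝ)) =>
        (⟨fun k => if h : (k : ℕ) < (y.1.1 : ℕ) + 1 then some (y.1.2 ⟨k, h⟩) else none,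
          fun k => if h : (k : ℕ) < (y.1.1 : ℕ) then some (y.2 ⟨k, h⟩) else none⟩ :
          (_ : Fin (M + 1) → Option S) × (Fin M → Option A)))
      ?_ ?_ ?_ ?_).symm
    · intro y h1 h2; exact Finset.mem_univ _
    · -- injectivity
      rintro ⟨⟨m1, σ1⟩, a1⟩ h11 h12 ⟨⟨m2, σ2⟩, a2⟩ h21 h22 heq
      simp only [Sigma.mk.inj_iff] at heq
      obtain ⟨hσe, hbe⟩ := heq
      have hmle : ∀ (n1 n2 : Fin (M + 1)) (τ1 : Fin ((n1:ℕ) + 1) → S) (τ2 : Fin ((n2:ℕ) + 1) → S),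
          (fun k : Fin (M+1) => if h : (k : ℕ) < (n1 : ℕ) + 1 then some (τ1 ⟨k, h⟩) else none) =
          (fun k : Fin (M+1) => if h : (k : ℕ) < (n2 : ℕ) + 1 then some (τ2 ⟨k, h⟩) else none) →
          (n1 : ℕ) ≤ (n2 : ℕ) := by
        intro n1 n2 τ1 τ2 he
        by_contra hlt
        have := congrFun he ⟨(n1 : ℕ), n1.isLt⟩
        rw [dif_pos (show (n1 : ℕ) < (n1 : ℕ) + 1 by omega),
          dif_neg (show ¬ (n1 : ℕ) < (n2 : ℕ) + 1 by omega)] at this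
        exact Option.some_ne_none _ this
      have hm12 : m1 = m2 :=
        Fin.ext (le_antisymm (hmle m1 m2 σ1 σ2 hσe) (hmle m2 m1 σ2 σ1 hσe.symm))
      subst hm12
      have hbe' : (fun k : Fin M => if h : (k : ℕ) < (m1 : ℕ) then some (a1 ⟨k, h⟩) else none)
          = (fun k : Fin M => if h : (k : ℕ) < (m1 : ℕ) then some (a2 ⟨k, h⟩) else none) :=
        eq_of_heq hbe
      have hσ12 : σ1 = σ2 := by
        funext j
        have hj1 : (j : ℕ) < (m1 : ℕ) + 1 := j.isLt
        have := congrFun hσe ⟨(j : ℕ), by omega⟩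
        rw [dif_pos hj1, dif_pos hj1] at this
        simpa using this
      have ha12 : a1 = a2 := by
        funext j
        have hj1 : (j : ℕ) < (m1 : ℕ) := j.isLt
        have := congrFun hbe' ⟨(j : ℕ), by omega⟩
        rw [dif_pos hj1, dif_pos hj1] at this
        simpa using this
      subst hσ12; subst ha12
      rfl
    · -- surjectivity
      rintro ⟨σ, b⟩ hmem hne
      dsimp only at hne
      have hne' := hne
      rw [mul_ne_zero_iff] at hne'
      obtain ⟨hne1, hne3⟩ := hne'
      rw [mul_ne_zero_iff] at hne1
      obtain ⟨hp0ne, -⟩ := hne1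
      have hfac : ∀ k : Fin M,
          T' (σ k.castSucc) (b k) (σ k.succ) * W (k : ℕ) (σ k.castSucc) (b k) (σ k.succ) ≠ 0 :=
        fun k => Finset.prod_ne_zero_iff.mp hne3 k (Finset.mem_univ k)
      have c1 : ∀ k : Fin M, σ k.castSucc = none → σ k.succ = none := by
        intro k h
        by_contra h'
        have hT := (mul_ne_zero_iff.mp (hfac k)).1
        rw [h, hT4, if_neg h'] at hT
        exact hT rfl
      have c2 : ∀ k : Fin M, σ k.succ = none → b k = none := by
        intro k h
        by_contra hb
        have hw := (mul_ne_zero_iff.mp (hfac k)).2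
        refine hw (hW0 _ _ _ _ ?_)
        rintro (⟨h1, -⟩ | ⟨s, a', s', -, -, hy, -⟩)
        · exact hb h1
        · rw [h] at hy; exact Option.some_ne_none _ hy.symm
      have c3 : ∀ k : Fin M, σ k.castSucc ≠ none → σ k.succ ≠ none → b k ≠ none := by
        intro k h1 h2 hb
        obtain ⟨s, hs⟩ := Option.ne_none_iff_exists'.mp h1
        have hT := (mul_ne_zero_iff.mp (hfac k)).1
        rw [hs, hb, hT3, if_neg h2] at hT
        exact hT rfl
      have hσ0 : σ 0 ≠ none := fun h => hp0ne (by rw [h, hp0a])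
      have cup : ∀ (n' : ℕ) (hn' : n' < M + 1) (n : ℕ) (hn : n < M + 1), n ≤ n' →
          σ ⟨n, hn⟩ = none → σ ⟨n', hn'⟩ = none := by
        intro n'
        induction n' with
        | zero =>
          intro hn' n hn hle h
          have : n = 0 := Nat.le_zero.mp hle
          subst this; exact h
        | succ d ih =>
          intro hn' n hn hle h
          by_cases hc : n = d + 1
          · subst hc; exact h
          · have hd : d < M + 1 := by omega
            have h1 : σ ⟨d, hd⟩ = none := ih hd n hn (by omega) h
            exact c1 ⟨d, by omega⟩ h1
      set D : Finset (Fin (M + 1)) := Finset.univ.filter (fun k => σ k ≠ none) with hD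
      have hD0 : (0 : Fin (M + 1)) ∈ D := by
        rw [hD, Finset.mem_filter]; exact ⟨Finset.mem_univ _, hσ0⟩
      set mv : Fin (M + 1) := D.max' ⟨0, hD0⟩ with hmv
      have hmvmem : σ mv ≠ none :=
        (Finset.mem_filter.mp (D.max'_mem ⟨0, hD0⟩)).2
      have hgt : ∀ k : Fin (M + 1), (mv : ℕ) < (k : ℕ) → σ k = none := by
        intro k hk
        by_contra h
        have hkD : k ∈ D := by rw [hD, Finset.mem_filter]; exact ⟨Finset.mem_univ _, h⟩
        have := D.le_max' k hkD
        omega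
      have hlt : ∀ k : Fin (M + 1), (k : ℕ) ≤ (mv : ℕ) → σ k ≠ none := by
        intro k hk h
        exact hmvmem (cup (mv : ℕ) mv.isLt (k : ℕ) k.isLt hk h)
      have hbsome : ∀ k : Fin M, (k : ℕ) < (mv : ℕ) → b k ≠ none := by
        intro k hk
        refine c3 k (hlt k.castSucc (by simp; omega)) (hlt k.succ (by simp; omega))
      set σb : Fin ((mv : ℕ) + 1) → S := fun j =>
        (σ ⟨(j : ℕ), by omega⟩).get
          (Option.ne_none_iff_isSome.mp
            (hlt ⟨(j : ℕ), by omega⟩ (show (j : ℕ) ≤ (mv : ℕ) by omega))) with hσb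
      set ab : Fin (mv : ℕ) → A := fun j =>
        (b ⟨(j : ℕ), by omega⟩).get
          (Option.ne_none_iff_isSome.mp
            (hbsome ⟨(j : ℕ), by omega⟩ (show (j : ℕ) < (mv : ℕ) by omega))) with hab
      have hσfun : (fun k : Fin (M + 1) =>
          if h : (k : ℕ) < (mv : ℕ) + 1 then some (σb ⟨k, h⟩) else none) = σ := by
        funext k
        by_cases h : (k : ℕ) < (mv : ℕ) + 1
        · rw [dif_pos h]
          simp [hσb]
        · rw [dif_neg h]
          exact (hgt k (by omega)).symm
      have hbfun : (fun k : Fin M =>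
          if h : (k : ℕ) < (mv : ℕ) then some (ab ⟨k, h⟩) else none) = b := by
        funext k
        by_cases h : (k : ℕ) < (mv : ℕ)
        · rw [dif_pos h]
          simp [hab]
        · rw [dif_neg h]
          refine (c2 k (hgt k.succ (by simp; omega))).symm
      have hk := pad_key ST p0 T γ R1 R2 R3 hterm M p0' hp0s R1' hR1s hR1a T' hT1 hT3 hT4
        W hW1 hW2 (mv : ℕ) (Nat.lt_succ_iff.mp mv.isLt) σb ab
      have h00 : (if h : (0 : ℕ) < (mv : ℕ) + 1 then some (σb ⟨0, h⟩) else none) = σ 0 := by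
        have := congrFun hσfun 0
        simpa [Fin.val_zero] using this
      have hEe : ∀ k : Fin (M + 1),
          (if h : (k : ℕ) < (mv : ℕ) + 1 then some (σb ⟨k, h⟩) else none) = σ k :=
        fun k => congrFun hσfun k
      have hbb : ∀ k : Fin M,
          (if h : (k : ℕ) < (mv : ℕ) then some (ab ⟨k, h⟩) else none) = b k :=
        fun k => congrFun hbfun k
      have hner : p0 (σb 0) * (∏ k : Fin (mv : ℕ), T (σb k.castSucc) (ab k) (σb k.succ)) *
          Real.exp ((∑ k : Fin ((mv : ℕ) + 1), γ ^ (k : ℕ) * R1 (σb k)) +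
            ∑ k : Fin (mv : ℕ), γ ^ (k : ℕ) *
              (R2 (σb k.castSucc) (ab k) + R3 (σb k.castSucc) (ab k) (σb k.succ))) ≠ 0 := by
        rw [← hk]
        simp only [h00, hEe, hbb]
        exact hne
      refine ⟨⟨⟨mv, σb⟩, ab⟩, Finset.mem_univ _, hner, ?_⟩
      rw [← hσfun, ← hbfun]
    · -- compatibility
      rintro ⟨⟨mf, σf⟩, af⟩ h1 h2
      dsimp only
      have hk := pad_key ST p0 T γ R1 R2 R3 hterm M p0' hp0s R1' hR1s hR1a T' hT1 hT3 hT4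
        W hW1 hW2 (mf : ℕ) (Nat.lt_succ_iff.mp mf.isLt) σf af
      rw [← hk]
      simp only [Fin.val_zero]
      rfl
end

section
/- In the padded formulation, for 1 ≤ t ≤ L−1 and s ∈ S, a ∈ A, s' ∈ S, the marginal p_t(s,a,s') computed as (1/Z)·α_t(s)·T(s'|s,a)·exp(γ^{t−1}R(s,a)+γ^{t−1}R(s,a,s'))·β_{L−t}(s') (using fixed-length-L backward messages β) equals the variable-length marginal (1/Z)·α_t(s)·T(s'|s,a)·exp(γ^{t−1}R(s,a)+γ^{t−1}R(s,a,s'))·∑_{l=t+1}^{L} β_{l,l−t}(s') computed without padding. -/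
set_option maxHeartbeats 1000000


/-- Padded/unpadded marginal equality: for `1 ≤ t ≤ L−1`, the transition marginal
computed with the fixed-length-`L` padded backward messages `βp` equals the
variable-length marginal computed with the unpadded backward messages `β`.
Padded states are `Option S` (`none` = auxiliary state), padded actions `Option A`
(`none` = auxiliary action), and forbidden transitions (reward −∞) have per-step
weight `W = 0`. -/
theorem padded_marginal_eq_variable_length_marginal {S A : Type*} [Fintype S] [Fintype A]
    [DecidableEq S] [DecidableEq A]
    (ST : Finset S)
    (T : S → A → S → ℝ) (γ : ℝ)
    (R1 : S → ℝ) (R2 : S → A → ℝ) (R3 : S → A → S → ℝ)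
    (hterm : ∀ s ∈ ST, ∀ a s', T s a s' = 0)
    (L : ℕ)
    -- unpadded (variable-length) backward messages
    (β : ℕ → ℕ → S → ℝ)
    (hβbase : ∀ l, 1 ≤ l → ∀ s, β l 1 s = Real.exp (γ ^ (l - 1) * R1 s))
    (hβrec : ∀ l t, 1 ≤ t → t + 1 ≤ l → ∀ s, β l (t + 1) s =
      ∑ a, ∑ s', T s a s' *
        Real.exp (γ ^ (l - t - 1) * (R1 s + R2 s a + R3 s a s')) * β l t s')
    -- padded rewards and dynamics
    (R1' : Option S → ℝ)
    (hR1s : ∀ s, R1' (some s) = R1 s) (hR1a : R1' none = 0)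
    (T' : Option S → Option A → Option S → ℝ)
    (hT1 : ∀ s a s', T' (some s) (some a) (some s') = if s ∈ ST then 0 else T s a s')
    (hT2 : ∀ s a, T' (some s) (some a) none = if s ∈ ST then 1 else 0)
    (hT3 : ∀ s y, T' (some s) none y = if y = none then 1 else 0)
    (hT4 : ∀ b y, T' none b y = if y = none then 1 else 0)
    (W : ℕ → Option S → Option A → Option S → ℝ)
    (hW1 : ∀ k s a s', s ∉ ST → W k (some s) (some a) (some s') =
      Real.exp (γ ^ k * (R2 s a + R3 s a s')))
    (hW2 : ∀ k x, W k x none none = 1)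
    (hW0 : ∀ k x b y,
      ¬((b = none ∧ y = none) ∨
        (∃ s a s', x = some s ∧ b = some a ∧ y = some s' ∧ s ∉ ST)) →
      W k x b y = 0)
    -- padded (fixed-length-L) backward messages
    (βp : ℕ → Option S → ℝ)
    (hpbase : ∀ x, βp 1 x = Real.exp (γ ^ (L - 1) * R1' x))
    (hprec : ∀ t, 1 ≤ t → t + 1 ≤ L → ∀ x, βp (t + 1) x =
      ∑ b, ∑ y, T' x b y * Real.exp (γ ^ (L - t - 1) * R1' x) *
        W (L - t - 1) x b y * βp t y)
    -- common forward messages and partition value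
    (α : ℕ → S → ℝ) (Z : ℝ) (hZ : Z ≠ 0)
    (t : ℕ) (ht1 : 1 ≤ t) (ht2 : t ≤ L - 1) (s : S) (a : A) (s' : S) :
    (1 / Z) * α t s * T s a s' *
        Real.exp (γ ^ (t - 1) * R2 s a + γ ^ (t - 1) * R3 s a s') *
        βp (L - t) (some s')
      = (1 / Z) * α t s * T s a s' *
          Real.exp (γ ^ (t - 1) * R2 s a + γ ^ (t - 1) * R3 s a s') *
          ∑ l ∈ Finset.Icc (t + 1) L, β l (l - t) s' := by

  have hL2 : 2 ≤ L := by omega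
  -- the padded backward message at the auxiliary state is always 1
  have hnone : ∀ u, 1 ≤ u → u ≤ L → βp u none = 1 := by
    intro u
    induction u with
    | zero => intro h; exact absurd h (by omega)
    | succ n ih =>
      intro h1 h2
      rcases Nat.eq_zero_or_pos n with hn | hn
      · subst hn
        rw [hpbase, hR1a]
        simp
      · have hWn : ∀ (k : ℕ) (a : A), W k none (some a) none = 0 := by
          intro k a
          apply hW0
          rintro (⟨h, -⟩ | ⟨s0, a', s0', h, -⟩) <;> simp_all
        have hT4n : T' none none none = 1 := by rw [hT4]; simp
        have hT4sa : ∀ (b : Option A) (y : S), T' none b (some y) = 0 := by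
          intro b y; rw [hT4]; simp
        rw [hprec n hn (by omega), Fintype.sum_option]
        simp only [Fintype.sum_option, hT4n, hT4sa, hR1a, hW2, hWn,
          ih hn (by omega), mul_zero, zero_mul, mul_one, one_mul,
          Finset.sum_const_zero, add_zero, zero_add]
        exact Real.exp_zero
  -- main lemma
  have hmain : ∀ u, 1 ≤ u → u ≤ L → ∀ x, βp u (some x) =
      ∑ l ∈ Finset.Icc (L - u + 1) L, β l (l - (L - u)) x := by
    intro u
    induction u with
    | zero => intro h; exact absurd h (by omega)
    | succ n ih =>
      intro h1 h2 x
      rcases Nat.eq_zero_or_pos n with hn | hn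
      · subst hn
        rw [hpbase, hR1s]
        rw [show L - 1 + 1 = L from by omega, Finset.Icc_self, Finset.sum_singleton]
        rw [show L - (L - 1) = 1 from by omega, hβbase L (by omega)]
      · have hkey : βp (n + 1) (some x) =
            Real.exp (γ ^ (L - n - 1) * R1 x) +
            ∑ a, ∑ y, T x a y *
              Real.exp (γ ^ (L - n - 1) * (R1 x + R2 x a + R3 x a y)) *
              βp n (some y) := by
          have hWsn : ∀ (k : ℕ) (a : A), W k (some x) (some a) none = 0 := by
            intro k a
            apply hW0
            rintro (⟨h, -⟩ | ⟨s0, a', s0', -, -, h, -⟩) <;> simp_all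
          have hT3n : T' (some x) none none = 1 := by rw [hT3]; simp
          have hT3s : ∀ y : S, T' (some x) none (some y) = 0 := by
            intro y; rw [hT3]; simp
          rw [hprec n hn (by omega), Fintype.sum_option]
          simp only [Fintype.sum_option, hT3n, hT3s, hT1, hR1s, hW2, hWsn,
            hnone n hn (by omega), zero_mul, mul_zero, mul_one, one_mul,
            Finset.sum_const_zero, add_zero, zero_add]
          congr 1
          refine Finset.sum_congr rfl fun a _ => Finset.sum_congr rfl fun y _ => ?_
          by_cases hx : x ∈ ST
          · rw [if_pos hx, hterm x hx a y]
            ring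
          · rw [if_neg hx, hW1 _ _ _ _ hx, mul_assoc (T x a y), ← Real.exp_add,
              show γ ^ (L - n - 1) * R1 x + γ ^ (L - n - 1) * (R2 x a + R3 x a y)
                = γ ^ (L - n - 1) * (R1 x + R2 x a + R3 x a y) from by ring]
        rw [hkey]
        rw [show L - (n + 1) + 1 = L - n from by omega]
        rw [show Finset.Icc (L - n) L = insert (L - n) (Finset.Icc (L - n + 1) L) from by
          rw [Finset.Icc_add_one_left_eq_Ioc, Finset.Ioc_insert_left (Nat.sub_le L n)]]
        rw [Finset.sum_insert (by simp)]
        congr 1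
        · rw [show L - n - (L - (n + 1)) = 1 from by omega, hβbase (L - n) (by omega)]
        · have hbody : ∀ l ∈ Finset.Icc (L - n + 1) L, β l (l - (L - (n + 1))) x =
              ∑ a, ∑ y, T x a y *
                Real.exp (γ ^ (L - n - 1) * (R1 x + R2 x a + R3 x a y)) *
                β l (l - (L - n)) y := by
            intro l hl
            rw [Finset.mem_Icc] at hl
            rw [show l - (L - (n + 1)) = (l - (L - n)) + 1 from by omega,
              hβrec l (l - (L - n)) (by omega) (by omega),
              show l - (l - (L - n)) - 1 = L - n - 1 from by omega]
          rw [Finset.sum_congr rfl hbody]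
          calc ∑ a, ∑ y, T x a y *
                  Real.exp (γ ^ (L - n - 1) * (R1 x + R2 x a + R3 x a y)) *
                  βp n (some y)
              = ∑ a, ∑ y, ∑ l ∈ Finset.Icc (L - n + 1) L, T x a y *
                  Real.exp (γ ^ (L - n - 1) * (R1 x + R2 x a + R3 x a y)) *
                  β l (l - (L - n)) y := by
                refine Finset.sum_congr rfl fun a _ => Finset.sum_congr rfl fun y _ => ?_
                rw [ih hn (by omega) y, Finset.mul_sum]
            _ = ∑ l ∈ Finset.Icc (L - n + 1) L, ∑ a, ∑ y, T x a y *
                  Real.exp (γ ^ (L - n - 1) * (R1 x + R2 x a + R3 x a y)) *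
                  β l (l - (L - n)) y :=
                (Finset.sum_congr rfl fun a _ => Finset.sum_comm).trans Finset.sum_comm
  rw [hmain (L - t) (by omega) (by omega) s', show L - (L - t) = t from by omega]
end
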